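/- Let H be a complex Hilbert space, K a bounded operator on H with dense range, C, C' positive invertible bounded operators, and U a bounded operator with closed range commuting with C and C'. If both (T_i U)_{i∈I} and (T_i U*)_{i∈I} are (C,C')-controlled K-operator frames for some family (T_i) of bounded operators on H, then U is invertible (bijective). -/

import Mathlib

open scoped ComplexInnerProductSpace

theorem stmt_8 {H : Type*} [NormedAddCommGroup H] [InnerProductSpace ℂ H] [CompleteSpace H]
    {I : Type*} (K U C C' : H →L[ℂ] H)
    (hC : C.IsPositive) (hC' : C'.IsPositive) (hCu : IsUnit C) (hC'u : IsUnit C')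
    (hKdense : DenseRange (K : H → H))
    (hUclosed : IsClosed (Set.range (U : H → H)))
    (hUC : U ∘L C = C ∘L U) (hUC' : U ∘L C' = C' ∘L U)
    (T : I → (H →L[ℂ] H)) (A₁ B₁ A₂ B₂ : ℝ)
    (hA₁ : 0 < A₁) (hB₁ : 0 < B₁) (hA₂ : 0 < A₂) (hB₂ : 0 < B₂)
    (hframeU : ∀ x : H,
      A₁ ^ 2 * ‖ContinuousLinearMap.adjoint K x‖ ^ 2 ≤
        ∑' i, (⟪(T i ∘L U) (C x), (T i ∘L U) (C' x)⟫).re ∧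
      ∑' i, (⟪(T i ∘L U) (C x), (T i ∘L U) (C' x)⟫).re ≤ B₁ ^ 2 * ‖x‖ ^ 2)
    (hframeUadj : ∀ x : H,
      A₂ ^ 2 * ‖ContinuousLinearMap.adjoint K x‖ ^ 2 ≤
        ∑' i, (⟪(T i ∘L ContinuousLinearMap.adjoint U) (C x),
                (T i ∘L ContinuousLinearMap.adjoint U) (C' x)⟫).re ∧
      ∑' i, (⟪(T i ∘L ContinuousLinearMap.adjoint U) (C x),
              (T i ∘L ContinuousLinearMap.adjoint U) (C' x)⟫).re ≤ B₂ ^ 2 * ‖x‖ ^ 2) :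
    Function.Bijective U := by
  -- K has dense range, so K* is injective
  have hKtop : (LinearMap.range (K : H →ₗ[ℂ] H)).topologicalClosure = ⊤ := by
    apply SetLike.ext'
    simpa [Submodule.topologicalClosure_coe, LinearMap.coe_range, ContinuousLinearMap.coe_coe] using hKdense.closure_range
  have hKbot : (LinearMap.range (K : H →ₗ[ℂ] H))ᗮ = ⊥ :=
    Submodule.topologicalClosure_eq_top_iff.mp hKtop
  have hKadj : ∀ x : H, ContinuousLinearMap.adjoint K x = 0 → x = 0 := by
    intro x hx
    have hmem : x ∈ (LinearMap.range (K : H →ₗ[ℂ] H))ᗮ := by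
      intro y hy
      obtain ⟨z, rfl⟩ := hy
      rw [ContinuousLinearMap.coe_coe, ← ContinuousLinearMap.adjoint_inner_right K z x, hx, inner_zero_right]
    rw [hKbot] at hmem
    simpa using hmem
  -- U is injective
  have hUinj : Function.Injective U := by
    rw [injective_iff_map_eq_zero]
    intro x hx
    have hterm : ∀ i : I, (⟪(T i ∘L U) (C x), (T i ∘L U) (C' x)⟫ : ℂ).re = 0 := by
      intro i
      have h1 : U (C x) = 0 := by
        have := congrFun (congrArg (fun f : H →L[ℂ] H => (f : H → H)) hUC) x
        simp only [ContinuousLinearMap.coe_comp', Function.comp_apply] at this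
        rw [this, hx, map_zero]
      simp [h1]
    have hsum : ∑' i, (⟪(T i ∘L U) (C x), (T i ∘L U) (C' x)⟫ : ℂ).re = 0 := by
      simp only [hterm, tsum_zero]
    have := (hframeU x).1
    rw [hsum] at this
    have hK0 : ‖ContinuousLinearMap.adjoint K x‖ = 0 := by
      by_contra h
      have hpos : 0 < ‖ContinuousLinearMap.adjoint K x‖ :=
        lt_of_le_of_ne (norm_nonneg _) (Ne.symm h)
      nlinarith [pow_pos hA₁ 2, pow_pos hpos 2]
    exact hKadj x (norm_eq_zero.mp hK0)
  -- U* commutes with C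
  have hUadjC : ContinuousLinearMap.adjoint U ∘L C = C ∘L ContinuousLinearMap.adjoint U := by
    have h := congrArg ContinuousLinearMap.adjoint hUC
    rw [ContinuousLinearMap.adjoint_comp, ContinuousLinearMap.adjoint_comp,
      hC.isSelfAdjoint.adjoint_eq] at h
    exact h.symm
  -- U* is injective
  have hUadjinj : ∀ x : H, ContinuousLinearMap.adjoint U x = 0 → x = 0 := by
    intro x hx
    have hterm : ∀ i : I, (⟪(T i ∘L ContinuousLinearMap.adjoint U) (C x),
        (T i ∘L ContinuousLinearMap.adjoint U) (C' x)⟫ : ℂ).re = 0 := by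
      intro i
      have h1 : ContinuousLinearMap.adjoint U (C x) = 0 := by
        have := congrFun (congrArg (fun f : H →L[ℂ] H => (f : H → H)) hUadjC) x
        simp only [ContinuousLinearMap.coe_comp', Function.comp_apply] at this
        rw [this, hx, map_zero]
      simp [h1]
    have hsum : ∑' i, (⟪(T i ∘L ContinuousLinearMap.adjoint U) (C x),
        (T i ∘L ContinuousLinearMap.adjoint U) (C' x)⟫ : ℂ).re = 0 := by
      simp only [hterm, tsum_zero]
    have := (hframeUadj x).1
    rw [hsum] at this
    have hK0 : ‖ContinuousLinearMap.adjoint K x‖ = 0 := by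
      by_contra h
      have hpos : 0 < ‖ContinuousLinearMap.adjoint K x‖ :=
        lt_of_le_of_ne (norm_nonneg _) (Ne.symm h)
      nlinarith [pow_pos hA₂ 2, pow_pos hpos 2]
    exact hKadj x (norm_eq_zero.mp hK0)
  -- range of U has trivial orthogonal complement
  have hUbot : (LinearMap.range (U : H →ₗ[ℂ] H))ᗮ = ⊥ := by
    rw [Submodule.eq_bot_iff]
    intro x hx
    apply hUadjinj
    rw [← norm_eq_zero]
    have : ∀ y : H, ⟪y, ContinuousLinearMap.adjoint U x⟫ = (0 : ℂ) := by
      intro y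
      rw [ContinuousLinearMap.adjoint_inner_right]
      exact hx (U y) ⟨y, rfl⟩
    have h0 := this (ContinuousLinearMap.adjoint U x)
    rw [inner_self_eq_zero] at h0
    simp [h0]
  -- range U is closed, so U is surjective
  have hUtop : (LinearMap.range (U : H →ₗ[ℂ] H)).topologicalClosure = ⊤ :=
    Submodule.topologicalClosure_eq_top_iff.mpr hUbot
  have hUsurj : Function.Surjective U := by
    intro y
    have hcl : closure (Set.range (U : H → H)) = Set.univ := by
      have := congrArg (fun s : Submodule ℂ H => (s : Set H)) hUtop
      simpa [Submodule.topologicalClosure_coe, LinearMap.coe_range, ContinuousLinearMap.coe_coe] using this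
    have : Set.range (U : H → H) = Set.univ := by
      rw [← hUclosed.closure_eq]; exact hcl
    exact Set.eq_univ_iff_forall.mp this y
  exact ⟨hUinj, hUsurj⟩
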